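/- arXiv:1708.01656 — 5 statements merged into one kernel-verified Lean document; each statement's English description precedes it below -/
import Mathlib

section
/- If G is a claw-free graph (no induced K_{1,3}), then the domination number of G equals the independent domination number of G, i.e., γ(G) = i(G). -/
open SimpleGraph Finset
open scoped Classical

/-- The closed neighborhood of `v` as a finset. -/
noncomputable def closedNbr {V : Type*} [Fintype V] (G : SimpleGraph V) (v : V) : Finset V :=
  Finset.univ.filter (fun u => u = v ∨ G.Adj u v)

/-- `S` is a dominating set of `G`. -/
def IsDomSet {V : Type*} (G : SimpleGraph V) (S : Finset V) : Prop :=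
  ∀ v, v ∉ S → ∃ u ∈ S, G.Adj u v

/-- The domination number γ(G). -/
noncomputable def domNum (V : Type*) [Fintype V] (G : SimpleGraph V) : ℕ :=
  sInf {n | ∃ S : Finset V, IsDomSet G S ∧ S.card = n}

/-- `S` is an independent dominating set of `G`. -/
def IsIndepDomSet {V : Type*} (G : SimpleGraph V) (S : Finset V) : Prop :=
  IsDomSet G S ∧ ∀ u ∈ S, ∀ v ∈ S, ¬ G.Adj u v

/-- The independent domination number i(G). -/
noncomputable def indepDomNum (V : Type*) [Fintype V] (G : SimpleGraph V) : ℕ :=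
  sInf {n | ∃ S : Finset V, IsIndepDomSet G S ∧ S.card = n}

/-- `S` is a 2-dominating set of `G`. -/
noncomputable def IsTwoDomSet {V : Type*} [Fintype V] (G : SimpleGraph V) (S : Finset V) : Prop :=
  ∀ v, v ∉ S → 2 ≤ (S.filter (fun u => G.Adj u v)).card

/-- The 2-domination number γ₂(G). -/
noncomputable def twoDomNum (V : Type*) [Fintype V] (G : SimpleGraph V) : ℕ :=
  sInf {n | ∃ S : Finset V, IsTwoDomSet G S ∧ S.card = n}

/-- `f` is a {k}-dominating function on `G`. -/
noncomputable def IsKDomFun {V : Type*} [Fintype V] (G : SimpleGraph V) (k : ℕ) (f : V → ℕ) : Prop :=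
  (∀ v, f v ≤ k) ∧ ∀ v, k ≤ ∑ u ∈ closedNbr G v, f u

/-- The {k}-domination number γ_{k}(G). -/
noncomputable def kDomNum (V : Type*) [Fintype V] (G : SimpleGraph V) (k : ℕ) : ℕ :=
  sInf {w | ∃ f : V → ℕ, IsKDomFun G k f ∧ w = ∑ v, f v}

/-- `f` is a weak {k}-dominating function on `G`. -/
noncomputable def IsWeakKDomFun {V : Type*} [Fintype V] (G : SimpleGraph V) (k : ℕ) (f : V → ℕ) : Prop :=
  (∀ v, f v ≤ k) ∧ ∀ v, f v = 0 → k ≤ ∑ u ∈ closedNbr G v, f u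

/-- The weak {k}-domination number γ_{w{k}}(G). -/
noncomputable def weakKDomNum (V : Type*) [Fintype V] (G : SimpleGraph V) (k : ℕ) : ℕ :=
  sInf {w | ∃ f : V → ℕ, IsWeakKDomFun G k f ∧ w = ∑ v, f v}

/-- `G` is claw-free: no induced K_{1,3}. -/
def ClawFree {V : Type*} (G : SimpleGraph V) : Prop :=
  ¬ ∃ v a b c : V, a ≠ b ∧ a ≠ c ∧ b ≠ c ∧
    G.Adj v a ∧ G.Adj v b ∧ G.Adj v c ∧ ¬ G.Adj a b ∧ ¬ G.Adj a c ∧ ¬ G.Adj b c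

theorem stmt0 {V : Type*} [Fintype V] (G : SimpleGraph V) (hG : ClawFree G) :
    domNum V G = indepDomNum V G := by
  classical
  have hAne : {n | ∃ S : Finset V, IsDomSet G S ∧ S.card = n}.Nonempty :=
    ⟨(Finset.univ : Finset V).card, Finset.univ, fun v hv => absurd (Finset.mem_univ v) hv, rfl⟩
  set e : Finset V → ℕ := fun S => ((S ×ˢ S).filter fun p : V × V => G.Adj p.1 p.2).card with he
  set T : Finset (Finset V) :=
    Finset.univ.filter (fun S : Finset V => IsDomSet G S ∧ S.card = domNum V G) with hT
  have hd : domNum V G = sInf {n | ∃ S : Finset V, IsDomSet G S ∧ S.card = n} := rfl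
  have hi : indepDomNum V G = sInf {n | ∃ S : Finset V, IsIndepDomSet G S ∧ S.card = n} := rfl
  have hTne : T.Nonempty := by
    obtain ⟨S, hS, hcard⟩ := Nat.sInf_mem hAne
    exact ⟨S, by rw [hT, Finset.mem_filter, hd]; exact ⟨Finset.mem_univ _, hS, hcard⟩⟩
  obtain ⟨S, hST, hSmin⟩ := Finset.exists_min_image T e hTne
  rw [hT, Finset.mem_filter] at hST
  obtain ⟨-, hSdom, hScard⟩ := hST
  have hSind : ∀ u ∈ S, ∀ v ∈ S, ¬ G.Adj u v := by
    by_contra h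
    push_neg at h
    obtain ⟨u₀, hu₀, v₀, hv₀, hadj⟩ := h
    have hu₀v₀ : u₀ ≠ v₀ := G.ne_of_adj hadj
    by_cases hpriv : ∃ w, w ∉ S ∧ G.Adj u₀ w ∧ ∀ x ∈ S, x ≠ u₀ → ¬ G.Adj x w
    · obtain ⟨w, hwS, hww, hwpriv⟩ := hpriv
      set D : Finset V := insert w (S.erase u₀) with hD
      have hwne : w ≠ u₀ := fun h => hwS (h ▸ hu₀)
      have hDdom : IsDomSet G D := by
        intro x hx
        have hxw : x ≠ w := fun h => hx (h ▸ Finset.mem_insert_self w _)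
        by_cases hxu : x = u₀
        · exact ⟨v₀, Finset.mem_insert_of_mem (Finset.mem_erase.2 ⟨fun h => hu₀v₀ h.symm, hv₀⟩),
            hxu ▸ hadj.symm⟩
        · have hxS : x ∉ S := fun h =>
            hx (Finset.mem_insert_of_mem (Finset.mem_erase.2 ⟨hxu, h⟩))
          by_cases hy : ∃ y ∈ S, y ≠ u₀ ∧ G.Adj y x
          · obtain ⟨y, hyS, hyu, hyx⟩ := hy
            exact ⟨y, Finset.mem_insert_of_mem (Finset.mem_erase.2 ⟨hyu, hyS⟩), hyx⟩
          · push_neg at hy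
            obtain ⟨y, hyS, hyx⟩ := hSdom x hxS
            have hyu : y = u₀ := by
              by_contra hc; exact (hy y hyS hc) hyx
            rw [hyu] at hyx
            have hvw : ¬ G.Adj v₀ w := fun hc =>
              hwpriv v₀ hv₀ (fun h => hu₀v₀ h.symm) hc
            have hvx : ¬ G.Adj v₀ x := fun hc =>
              hy v₀ hv₀ (fun h => hu₀v₀ h.symm) hc
            have hwx : G.Adj w x := by
              by_contra hwx
              exact hG ⟨u₀, v₀, w, x,
                fun h => hwS (h ▸ hv₀), fun h => hxS (h ▸ hv₀), fun h => hxw h.symm,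
                hadj, hww, hyx, hvw, hvx, hwx⟩
            exact ⟨w, Finset.mem_insert_self w _, hwx⟩
      have hDcard : D.card = domNum V G := by
        rw [hD, Finset.card_insert_of_notMem
          (fun h => hwS (Finset.mem_of_mem_erase h)),
          Finset.card_erase_of_mem hu₀]
        have : 1 ≤ S.card := Finset.card_pos.2 ⟨u₀, hu₀⟩
        omega
      have hDT : D ∈ T := by
        rw [hT, Finset.mem_filter]
        exact ⟨Finset.mem_univ _, hDdom, hDcard⟩
      -- no vertex of D is adjacent to w
      have hnoadjw : ∀ b ∈ D, ¬ G.Adj w b := by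
        intro b hb hwb
        have hbw : b ≠ w := fun h => G.ne_of_adj hwb h.symm
        have hb' : b ∈ S.erase u₀ := by
          rcases Finset.mem_insert.1 hb with h | h
          · exact absurd h hbw
          · exact h
        exact hwpriv b (Finset.mem_of_mem_erase hb') (Finset.ne_of_mem_erase hb') hwb.symm
      have hsub : ((D ×ˢ D).filter fun p : V × V => G.Adj p.1 p.2) ⊆
          (((S.erase u₀) ×ˢ (S.erase u₀)).filter fun p : V × V => G.Adj p.1 p.2) := by
        intro p hp
        rw [Finset.mem_filter, Finset.mem_product] at hp ⊢
        obtain ⟨⟨h1, h2⟩, hadjp⟩ := hp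
        have hp1 : p.1 ≠ w := by
          intro hc
          exact hnoadjw p.2 h2 (hc ▸ hadjp)
        have hp2 : p.2 ≠ w := by
          intro hc
          exact hnoadjw p.1 h1 (hc ▸ hadjp.symm)
        refine ⟨⟨?_, ?_⟩, hadjp⟩
        · rcases Finset.mem_insert.1 h1 with h | h
          · exact absurd h hp1
          · exact h
        · rcases Finset.mem_insert.1 h2 with h | h
          · exact absurd h hp2
          · exact h
      have hssub : (((S.erase u₀) ×ˢ (S.erase u₀)).filter fun p : V × V => G.Adj p.1 p.2) ⊂
          ((S ×ˢ S).filter fun p : V × V => G.Adj p.1 p.2) := by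
        refine Finset.ssubset_iff_of_subset ?_ |>.2 ⟨(u₀, v₀), ?_, ?_⟩
        · intro p hp
          rw [Finset.mem_filter, Finset.mem_product] at hp ⊢
          exact ⟨⟨Finset.mem_of_mem_erase hp.1.1, Finset.mem_of_mem_erase hp.1.2⟩, hp.2⟩
        · rw [Finset.mem_filter, Finset.mem_product]
          exact ⟨⟨hu₀, hv₀⟩, hadj⟩
        · rw [Finset.mem_filter, Finset.mem_product]
          rintro ⟨⟨h1, -⟩, -⟩
          exact Finset.notMem_erase u₀ S h1
      have hlt : e D < e S :=
        lt_of_le_of_lt (Finset.card_le_card hsub) (Finset.card_lt_card hssub)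
      exact absurd (hSmin D hDT) (by omega)
    · push_neg at hpriv
      have hdom' : IsDomSet G (S.erase u₀) := by
        intro x hx
        by_cases hxu : x = u₀
        · exact ⟨v₀, Finset.mem_erase.2 ⟨fun h => hu₀v₀ h.symm, hv₀⟩, hxu ▸ hadj.symm⟩
        · have hxS : x ∉ S := fun h => hx (Finset.mem_erase.2 ⟨hxu, h⟩)
          obtain ⟨y, hyS, hyx⟩ := hSdom x hxS
          by_cases hyu : y = u₀
          · subst hyu
            obtain ⟨z, hzS, hzu, hzx⟩ := hpriv x hxS hyx
            exact ⟨z, Finset.mem_erase.2 ⟨hzu, hzS⟩, hzx⟩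
          · exact ⟨y, Finset.mem_erase.2 ⟨hyu, hyS⟩, hyx⟩
      have hle : domNum V G ≤ (S.erase u₀).card := by
        rw [hd]; exact Nat.sInf_le ⟨S.erase u₀, hdom', rfl⟩
      rw [Finset.card_erase_of_mem hu₀] at hle
      have h1 : 1 ≤ S.card := Finset.card_pos.2 ⟨u₀, hu₀⟩
      omega
  have hmemB : (S.card : ℕ) ∈ {n | ∃ S : Finset V, IsIndepDomSet G S ∧ S.card = n} :=
    ⟨S, ⟨hSdom, hSind⟩, rfl⟩
  have h1 : indepDomNum V G ≤ domNum V G := by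
    rw [hi, ← hScard]; exact Nat.sInf_le hmemB
  have h2 : domNum V G ≤ indepDomNum V G := by
    have hBne : {n | ∃ S : Finset V, IsIndepDomSet G S ∧ S.card = n}.Nonempty := ⟨_, hmemB⟩
    obtain ⟨S', hS', hcard'⟩ := Nat.sInf_mem hBne
    rw [hd, hi, ← hcard']
    exact Nat.sInf_le ⟨S', hS'.1, rfl⟩
  omega
end

section
/- If G is a claw-free finite simple graph and H is any finite simple graph, then the weak {2}-domination number of the Cartesian product G □ H is at least γ(G)·γ(H): γ_{w{2}}(G □ H) ≥ γ(G)γ(H). -/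
open SimpleGraph Finset
open scoped Classical

/-- open neighborhood as a finset -/
noncomputable def nbr {V : Type*} [Fintype V] (G : SimpleGraph V) (v : V) : Finset V :=
  Finset.univ.filter (fun u => G.Adj u v)

lemma exists_min_dom {V : Type*} [Fintype V] (G : SimpleGraph V) :
    ∃ S : Finset V, IsDomSet G S ∧ S.card = domNum V G := by
  have hne : {n | ∃ S : Finset V, IsDomSet G S ∧ S.card = n}.Nonempty :=
    ⟨Finset.univ.card, Finset.univ, fun v hv => absurd (mem_univ v) hv, rfl⟩
  obtain ⟨S, hS, hc⟩ := Nat.sInf_mem hne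
  exact ⟨S, hS, hc⟩

lemma domNum_le {V : Type*} [Fintype V] (G : SimpleGraph V) (S : Finset V)
    (hS : IsDomSet G S) : domNum V G ≤ S.card :=
  Nat.sInf_le ⟨S, hS, rfl⟩

noncomputable def eCnt {V : Type*} [Fintype V] (G : SimpleGraph V) (S : Finset V) : ℕ :=
  ((S ×ˢ S).filter (fun p => G.Adj p.1 p.2)).card

/-- Allan–Laskar: a claw-free graph has an independent dominating set of size γ. -/
lemma exists_indep_min_dom {V : Type*} [Fintype V] (G : SimpleGraph V) (hG : ClawFree G) :
    ∃ S : Finset V, IsDomSet G S ∧ S.card = domNum V G ∧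
      ∀ u ∈ S, ∀ v ∈ S, ¬ G.Adj u v := by
  classical
  set 𝒩 : Set ℕ := {m | ∃ S : Finset V, (IsDomSet G S ∧ S.card = domNum V G) ∧ eCnt G S = m}
  have hne : 𝒩.Nonempty := by
    obtain ⟨S, hS, hc⟩ := exists_min_dom G
    exact ⟨eCnt G S, S, ⟨hS, hc⟩, rfl⟩
  obtain ⟨S, ⟨hdom, hcard⟩, hmin⟩ := Nat.sInf_mem hne
  refine ⟨S, hdom, hcard, ?_⟩
  intro u hu v hv hadj
  have huv : u ≠ v := hadj.ne
  set P : Finset V := Finset.univ.filter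
    (fun x => x ∉ S ∧ G.Adj u x ∧ ∀ y ∈ S, G.Adj y x → y = u) with hP
  by_cases hPne : P.Nonempty
  · obtain ⟨w, hw⟩ := hPne
    rw [hP, mem_filter] at hw
    obtain ⟨-, hwS, hwadj, hwpriv⟩ := hw
    have hwu : w ≠ u := fun h => hwS (h ▸ hu)
    have hclique : ∀ a ∈ P, ∀ b ∈ P, a ≠ b → G.Adj a b := by
      intro a ha b hb hab
      rw [hP, mem_filter] at ha hb
      obtain ⟨-, haS, haadj, hapriv⟩ := ha
      obtain ⟨-, hbS, hbadj, hbpriv⟩ := hb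
      by_contra hnadj
      refine hG ⟨u, v, a, b, ?_, ?_, hab, hadj, haadj, hbadj, ?_, ?_, hnadj⟩
      · exact fun h => haS (h ▸ hv)
      · exact fun h => hbS (h ▸ hv)
      · intro h; exact hadj.ne ((hapriv v hv h).symm)
      · intro h; exact hadj.ne ((hbpriv v hv h).symm)
    set S' : Finset V := insert w (S.erase u) with hS'
    have hwE : w ∉ S.erase u := fun h => hwS (mem_of_mem_erase h)
    have hcard' : S'.card = S.card := by
      rw [hS', card_insert_of_notMem hwE, card_erase_of_mem hu]
      have : 1 ≤ S.card := card_pos.mpr ⟨u, hu⟩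
      omega
    have hdom' : IsDomSet G S' := by
      intro x hx
      by_cases hxu : x = u
      · subst hxu
        exact ⟨v, mem_insert_of_mem (mem_erase.mpr ⟨hadj.ne', hv⟩), hadj.symm⟩
      · have hxS : x ∉ S := by
          intro h; exact hx (mem_insert_of_mem (mem_erase.mpr ⟨hxu, h⟩))
        obtain ⟨y, hy, hyadj⟩ := hdom x hxS
        by_cases hyu : y = u
        · rw [hyu] at hyadj
          by_cases hex : ∃ y' ∈ S, G.Adj y' x ∧ y' ≠ u
          · obtain ⟨y', hy', hy'a, hy'u⟩ := hex
            exact ⟨y', mem_insert_of_mem (mem_erase.mpr ⟨hy'u, hy'⟩), hy'a⟩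
          · push_neg at hex
            have hxP : x ∈ P := by
              rw [hP, mem_filter]
              exact ⟨mem_univ x, hxS, hyadj, fun y' hy' ha => hex y' hy' ha⟩
            have hxw : x ≠ w := fun h => hx (h ▸ mem_insert_self w _)
            exact ⟨w, mem_insert_self w _, hclique w (by rw [hP, mem_filter]; exact ⟨mem_univ w, hwS, hwadj, hwpriv⟩) x hxP hxw.symm⟩
        · exact ⟨y, mem_insert_of_mem (mem_erase.mpr ⟨hyu, hy⟩), hyadj⟩
    have hEeq : ((S' ×ˢ S').filter (fun p => G.Adj p.1 p.2)) =
        (((S.erase u) ×ˢ (S.erase u)).filter (fun p => G.Adj p.1 p.2)) := by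
      ext p
      simp only [mem_filter, mem_product, hS', mem_insert]
      constructor
      · rintro ⟨⟨h1, h2⟩, hadjp⟩
        have hp1 : p.1 ∈ S.erase u := by
          rcases h1 with h1 | h1
          · exfalso
            rcases h2 with h2 | h2
            · exact G.irrefl (h1 ▸ h2 ▸ hadjp)
            · have := hwpriv p.2 (mem_of_mem_erase h2) (h1 ▸ hadjp).symm
              exact (mem_erase.mp h2).1 this
          · exact h1
        have hp2 : p.2 ∈ S.erase u := by
          rcases h2 with h2 | h2
          · exfalso
            have := hwpriv p.1 (mem_of_mem_erase hp1) (h2 ▸ hadjp)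
            exact (mem_erase.mp hp1).1 this
          · exact h2
        exact ⟨⟨hp1, hp2⟩, hadjp⟩
      · rintro ⟨⟨h1, h2⟩, hadjp⟩
        exact ⟨⟨Or.inr h1, Or.inr h2⟩, hadjp⟩
    have hlt : eCnt G S' < eCnt G S := by
      rw [eCnt, hEeq]
      apply card_lt_card
      constructor
      · intro p hp
        rw [mem_filter, mem_product] at hp ⊢
        exact ⟨⟨mem_of_mem_erase hp.1.1, mem_of_mem_erase hp.1.2⟩, hp.2⟩
      · intro hsub
        have : (u, v) ∈ ((S.erase u ×ˢ S.erase u).filter (fun p => G.Adj p.1 p.2)) :=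
          hsub (by rw [mem_filter, mem_product]; exact ⟨⟨hu, hv⟩, hadj⟩)
        rw [mem_filter, mem_product, mem_erase] at this
        exact this.1.1.1 rfl
    have : sInf 𝒩 ≤ eCnt G S' := Nat.sInf_le ⟨S', ⟨hdom', hcard' ▸ hcard⟩, rfl⟩
    omega
  · have hdom' : IsDomSet G (S.erase u) := by
      intro x hx
      by_cases hxu : x = u
      · subst hxu
        exact ⟨v, mem_erase.mpr ⟨hadj.ne', hv⟩, hadj.symm⟩
      · have hxS : x ∉ S := fun h => hx (mem_erase.mpr ⟨hxu, h⟩)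
        obtain ⟨y, hy, hyadj⟩ := hdom x hxS
        by_cases hyu : y = u
        · rw [hyu] at hyadj
          by_cases hex : ∃ y' ∈ S, G.Adj y' x ∧ y' ≠ u
          · obtain ⟨y', hy', hy'a, hy'u⟩ := hex
            exact ⟨y', mem_erase.mpr ⟨hy'u, hy'⟩, hy'a⟩
          · push_neg at hex
            exact absurd ⟨x, by rw [hP, mem_filter]; exact ⟨mem_univ x, hxS, hyadj, fun y' h ha => hex y' h ha⟩⟩ hPne
        · exact ⟨y, mem_erase.mpr ⟨hyu, hy⟩, hyadj⟩
    have h1 : domNum V G ≤ (S.erase u).card := domNum_le G _ hdom'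
    rw [card_erase_of_mem hu] at h1
    have : 1 ≤ S.card := card_pos.mpr ⟨u, hu⟩
    omega

/-- In a claw-free graph, a vertex has at most 2 neighbors in an independent set. -/
lemma nbrs_in_indep_le_two {V : Type*} [Fintype V] (G : SimpleGraph V) (hG : ClawFree G)
    (S : Finset V) (hind : ∀ u ∈ S, ∀ v ∈ S, ¬ G.Adj u v) (x : V) (B : Finset V)
    (hB : B ⊆ S) : (B.filter (fun g => G.Adj x g)).card ≤ 2 := by
  by_contra hlt
  push_neg at hlt
  obtain ⟨a, ha, b, hb, c, hc, hab, hac, hbc⟩ := Finset.two_lt_card.mp hlt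
  rw [mem_filter] at ha hb hc
  exact hG ⟨x, a, b, c, hab, hac, hbc, ha.2, hb.2, hc.2,
    hind a (hB ha.1) b (hB hb.1), hind a (hB ha.1) c (hB hc.1), hind b (hB hb.1) c (hB hc.1)⟩

/-- Column-counting lemma. -/
lemma column_count {V : Type*} [Fintype V] (G : SimpleGraph V) (hG : ClawFree G)
    (S : Finset V) (hind : ∀ u ∈ S, ∀ v ∈ S, ¬ G.Adj u v) (fh : V → ℕ) :
    (S.filter (fun g => 1 ≤ fh g ∨ 2 ≤ ∑ g' ∈ nbr G g, fh g')).card ≤ ∑ g, fh g := by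
  classical
  set A : Finset V := S.filter (fun g => 1 ≤ fh g) with hA
  set B : Finset V := S.filter (fun g => fh g = 0 ∧ 2 ≤ ∑ g' ∈ nbr G g, fh g') with hB
  have hsub : S.filter (fun g => 1 ≤ fh g ∨ 2 ≤ ∑ g' ∈ nbr G g, fh g') ⊆ A ∪ B := by
    intro g hg
    rw [mem_filter] at hg
    rcases hg with ⟨hgS, h1 | h2⟩
    · exact mem_union_left _ (mem_filter.mpr ⟨hgS, h1⟩)
    · by_cases h0 : fh g = 0
      · exact mem_union_right _ (mem_filter.mpr ⟨hgS, h0, h2⟩)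
      · exact mem_union_left _ (mem_filter.mpr ⟨hgS, Nat.one_le_iff_ne_zero.mpr h0⟩)
  have hAle : A.card ≤ ∑ g ∈ S, fh g := by
    calc A.card = ∑ g ∈ A, 1 := by rw [sum_const, smul_eq_mul, mul_one]
    _ ≤ ∑ g ∈ A, fh g := sum_le_sum (fun g hg => (mem_filter.mp hg).2)
    _ ≤ ∑ g ∈ S, fh g := sum_le_sum_of_subset (filter_subset _ _)
  have hdegS : ∀ x ∈ S, (B.filter (fun g => G.Adj x g)).card = 0 := by
    intro x hx
    rw [card_eq_zero, filter_eq_empty_iff]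
    intro g hg
    exact hind x hx g (mem_of_mem_filter g hg)
  have hswap : ∑ g ∈ B, ∑ g' ∈ nbr G g, fh g'
      = ∑ x : V, (B.filter (fun g => G.Adj x g)).card * fh x := by
    calc ∑ g ∈ B, ∑ g' ∈ nbr G g, fh g'
        = ∑ g ∈ B, ∑ x : V, if G.Adj x g then fh x else 0 := by
          refine sum_congr rfl fun g _ => ?_
          rw [nbr, sum_filter]
      _ = ∑ x : V, ∑ g ∈ B, if G.Adj x g then fh x else 0 := Finset.sum_comm
      _ = ∑ x : V, (B.filter (fun g => G.Adj x g)).card * fh x := by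
          refine sum_congr rfl fun x _ => ?_
          rw [← sum_filter, sum_const, smul_eq_mul]
  have hBle : B.card ≤ ∑ g ∈ Sᶜ, fh g := by
    have h2B : 2 * B.card ≤ ∑ g ∈ B, ∑ g' ∈ nbr G g, fh g' := by
      calc 2 * B.card = ∑ _g ∈ B, 2 := by rw [sum_const, smul_eq_mul, mul_comm]
      _ ≤ _ := sum_le_sum (fun g hg => (mem_filter.mp hg).2.2)
    have hb2 : ∑ g ∈ B, ∑ g' ∈ nbr G g, fh g' ≤ 2 * ∑ g ∈ Sᶜ, fh g := by
      rw [hswap, ← Finset.sum_add_sum_compl S (fun x => (B.filter (fun g => G.Adj x g)).card * fh x)]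
      have h1 : ∑ x ∈ S, (B.filter (fun g => G.Adj x g)).card * fh x = 0 :=
        sum_eq_zero (fun x hx => by rw [hdegS x hx, zero_mul])
      rw [h1, zero_add, mul_sum]
      refine sum_le_sum fun x _ => ?_
      exact Nat.mul_le_mul_right _ (nbrs_in_indep_le_two G hG S hind x B (filter_subset _ _))
    omega
  calc (S.filter (fun g => 1 ≤ fh g ∨ 2 ≤ ∑ g' ∈ nbr G g, fh g')).card
      ≤ (A ∪ B).card := card_le_card hsub
    _ ≤ A.card + B.card := card_union_le _ _
    _ ≤ ∑ g ∈ S, fh g + ∑ g ∈ Sᶜ, fh g := Nat.add_le_add hAle hBle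
    _ = ∑ g, fh g := Finset.sum_add_sum_compl S fh

/-- Decomposition of the closed neighborhood in the box product. -/
lemma closedNbr_box {V W : Type*} [Fintype V] [Fintype W] (G : SimpleGraph V)
    (H : SimpleGraph W) (g : V) (h : W) :
    closedNbr (G □ H) (g, h)
      = insert (g, h) (((nbr G g).image (fun g' => (g', h))) ∪
          ((nbr H h).image (fun h' => (g, h')))) := by
  ext ⟨p1, p2⟩
  simp only [closedNbr, nbr, mem_filter, mem_univ, true_and, mem_insert, mem_union, mem_image,
    SimpleGraph.boxProd_adj]
  constructor
  · rintro (h0 | ⟨hadj, rfl⟩ | ⟨hadj, rfl⟩)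
    · exact Or.inl h0
    · exact Or.inr (Or.inl ⟨p1, hadj, rfl⟩)
    · exact Or.inr (Or.inr ⟨p2, hadj, rfl⟩)
  · rintro (h0 | ⟨g', hg', heq⟩ | ⟨h', hh', heq⟩)
    · exact Or.inl h0
    · obtain ⟨rfl, rfl⟩ := Prod.ext_iff.mp heq
      exact Or.inr (Or.inl ⟨hg', rfl⟩)
    · obtain ⟨rfl, rfl⟩ := Prod.ext_iff.mp heq
      exact Or.inr (Or.inr ⟨hh', rfl⟩)

lemma sum_closedNbr_box {V W : Type*} [Fintype V] [Fintype W] (G : SimpleGraph V)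
    (H : SimpleGraph W) (g : V) (h : W) (f : V × W → ℕ) :
    ∑ u ∈ closedNbr (G □ H) (g, h), f u
      = f (g, h) + ∑ g' ∈ nbr G g, f (g', h) + ∑ h' ∈ nbr H h, f (g, h') := by
  rw [closedNbr_box]
  have hni : (g, h) ∉ ((nbr G g).image (fun g' => (g', h))) ∪
      ((nbr H h).image (fun h' => (g, h'))) := by
    simp only [mem_union, mem_image, Prod.mk.injEq, nbr, mem_filter, mem_univ, true_and]
    rintro (⟨g', hg', rfl, -⟩ | ⟨h', hh', -, rfl⟩)
    · exact G.irrefl hg'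
    · exact H.irrefl hh'
  have hdisj : Disjoint ((nbr G g).image (fun g' => (g', h)))
      ((nbr H h).image (fun h' => (g, h'))) := by
    rw [Finset.disjoint_left]
    simp only [mem_image, Prod.mk.injEq, nbr, mem_filter, mem_univ, true_and]
    rintro p ⟨g', hg', rfl⟩ ⟨h', hh', heq⟩
    have hgg : g = g' := (Prod.ext_iff.mp heq).1
    exact G.irrefl (hgg ▸ hg')
  rw [sum_insert hni, sum_union hdisj,
    sum_image (fun a _ b _ hab => by injection hab),
    sum_image (fun a _ b _ hab => by injection hab), add_assoc]

theorem stmt6 {V W : Type*} [Fintype V] [Fintype W]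
    (G : SimpleGraph V) (H : SimpleGraph W) (hG : ClawFree G) :
    domNum V G * domNum W H ≤ weakKDomNum (V × W) (G □ H) 2 := by
  classical
  have hfne : {w | ∃ f : V × W → ℕ, IsWeakKDomFun (G □ H) 2 f ∧ w = ∑ v, f v}.Nonempty :=
    ⟨∑ _v : V × W, 2, fun _ => 2, ⟨fun _ => le_refl 2, fun v h => by simp at h⟩, rfl⟩
  obtain ⟨f, hf, hw⟩ := Nat.sInf_mem hfne
  obtain ⟨S, hSdom, hScard, hSind⟩ := exists_indep_min_dom G hG
  set D : V → Finset W := fun g =>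
    Finset.univ.filter (fun h => 1 ≤ f (g, h) ∨ 2 ≤ ∑ g' ∈ nbr G g, f (g', h)) with hD
  have hDmem : ∀ g h, h ∈ D g ↔ (1 ≤ f (g, h) ∨ 2 ≤ ∑ g' ∈ nbr G g, f (g', h)) := by
    intro g h
    rw [hD]
    simp only [mem_filter, mem_univ, true_and]
  have hDdom : ∀ g, IsDomSet H (D g) := by
    intro g h hh
    by_contra hno
    push_neg at hno
    rw [hDmem] at hh
    push_neg at hh
    obtain ⟨h1, h2⟩ := hh
    have h0 : f (g, h) = 0 := Nat.lt_one_iff.mp h1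
    have hcl := hf.2 (g, h) h0
    rw [sum_closedNbr_box] at hcl
    have hH0 : ∑ h' ∈ nbr H h, f (g, h') = 0 := by
      refine sum_eq_zero fun h' hh' => ?_
      rw [nbr, mem_filter] at hh'
      by_contra hne
      have hmem : h' ∈ D g := by
        rw [hDmem]
        exact Or.inl (Nat.one_le_iff_ne_zero.mpr hne)
      exact hno h' hmem hh'.2
    rw [h0, hH0, zero_add, add_zero] at hcl
    exact absurd hcl (not_le.mpr h2)
  have hsum1 : S.card * domNum W H ≤ ∑ g ∈ S, (D g).card := by
    calc S.card * domNum W H = ∑ _g ∈ S, domNum W H := by rw [sum_const, smul_eq_mul]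
    _ ≤ ∑ g ∈ S, (D g).card := sum_le_sum fun g _ => domNum_le H (D g) (hDdom g)
  have hsum2 : ∑ g ∈ S, (D g).card ≤ ∑ v : V × W, f v := by
    calc ∑ g ∈ S, (D g).card
        = ∑ g ∈ S, ∑ h : W,
            (if 1 ≤ f (g, h) ∨ 2 ≤ ∑ g' ∈ nbr G g, f (g', h) then 1 else 0) := by
          refine sum_congr rfl fun g _ => ?_
          have : D g = Finset.univ.filter
              (fun h => 1 ≤ f (g, h) ∨ 2 ≤ ∑ g' ∈ nbr G g, f (g', h)) := by rw [hD]
          rw [this, card_filter]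
      _ = ∑ h : W, ∑ g ∈ S,
            (if 1 ≤ f (g, h) ∨ 2 ≤ ∑ g' ∈ nbr G g, f (g', h) then 1 else 0) :=
          Finset.sum_comm
      _ = ∑ h : W, (S.filter (fun g => 1 ≤ f (g, h) ∨ 2 ≤ ∑ g' ∈ nbr G g, f (g', h))).card := by
          refine sum_congr rfl fun h _ => ?_
          exact (card_filter _ _).symm
      _ ≤ ∑ h : W, ∑ g : V, f (g, h) :=
          sum_le_sum fun h _ => column_count G hG S hSind (fun g => f (g, h))
      _ = ∑ g : V, ∑ h : W, f (g, h) := Finset.sum_comm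
      _ = ∑ v : V × W, f v := (Fintype.sum_prod_type _).symm
  calc domNum V G * domNum W H = S.card * domNum W H := by rw [hScard]
    _ ≤ ∑ g ∈ S, (D g).card := hsum1
    _ ≤ ∑ v : V × W, f v := hsum2
    _ = weakKDomNum (V × W) (G □ H) 2 := by rw [weakKDomNum]; exact hw.symm
end

section
/- If G is a claw-free finite simple graph and H is any finite simple graph, then the {2}-domination number of the Cartesian product satisfies γ_{{2}}(G □ H) ≥ γ(G)γ(H). -/
open SimpleGraph Finset
open scoped Classical

lemma exists_indep_dom {V : Type*} [Fintype V] (G : SimpleGraph V) :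
    ∃ I : Finset V, (∀ u ∈ I, ∀ v ∈ I, ¬ G.Adj u v) ∧ IsDomSet G I := by
  classical
  obtain ⟨I, hI, hmax⟩ := Finset.exists_max_image
    ((Finset.univ : Finset (Finset V)).filter (fun I => ∀ u ∈ I, ∀ v ∈ I, ¬ G.Adj u v))
    Finset.card ⟨∅, by simp⟩
  simp only [mem_filter, mem_univ, true_and] at hI
  refine ⟨I, hI, ?_⟩
  intro v hv
  by_contra hno
  push_neg at hno
  have hins : ∀ u ∈ insert v I, ∀ w ∈ insert v I, ¬ G.Adj u w := by
    intro u hu w hw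
    rcases mem_insert.1 hu with h1 | h1
    · rcases mem_insert.1 hw with h2 | h2
      · subst h1; subst h2; exact G.irrefl
      · subst h1; exact fun h => hno w h2 h.symm
    · rcases mem_insert.1 hw with h2 | h2
      · subst h2; exact hno u h1
      · exact hI u h1 w h2
  have := hmax (insert v I) (by simp only [mem_filter, mem_univ, true_and]; exact hins)
  rw [card_insert_of_notMem hv] at this
  omega

theorem stmt7 {V W : Type*} [Fintype V] [Fintype W]
    (G : SimpleGraph V) (H : SimpleGraph W) (hG : ClawFree G) :
    domNum V G * domNum W H ≤ kDomNum (V × W) (G □ H) 2 := by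
  classical
  have hne : {w | ∃ f : V × W → ℕ, IsKDomFun (G □ H) 2 f ∧ w = ∑ v, f v}.Nonempty := by
    refine ⟨∑ v : V × W, (fun _ => 2) v, fun _ => 2, ⟨fun v => le_refl 2, ?_⟩, rfl⟩
    intro v
    have hv : v ∈ closedNbr (G □ H) v := by simp [closedNbr]
    have h2 := Finset.single_le_sum (f := fun _ : V × W => (2:ℕ)) (fun _ _ => Nat.zero_le _) hv
    simpa using h2
  refine le_csInf hne ?_
  rintro w ⟨f, ⟨hf1, hf2⟩, rfl⟩
  obtain ⟨I, hIind, hIdom⟩ := exists_indep_dom G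
  have hγG : domNum V G ≤ I.card := Nat.sInf_le ⟨I, hIdom, rfl⟩
  set B : V → Finset W := fun g =>
    univ.filter (fun h => ∑ w ∈ closedNbr H h, f (g, w) = 0) with hBdef
  -- Step 1: domination in H by support ∪ B g
  have hdomH : ∀ g : V, domNum W H ≤ (∑ h, f (g, h)) + (B g).card := by
    intro g
    set D := (univ.filter (fun h => f (g, h) ≠ 0)) ∪ B g with hD
    have hDdom : IsDomSet H D := by
      intro h hh
      simp only [hD, hBdef, mem_union, mem_filter, mem_univ, true_and, not_or, not_not] at hh
      obtain ⟨hfz, hsum⟩ := hh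
      have hex : ∃ w ∈ closedNbr H h, f (g, w) ≠ 0 := by
        by_contra hc
        push_neg at hc
        exact hsum (Finset.sum_eq_zero hc)
      obtain ⟨w, hwmem, hwne⟩ := hex
      have hwh : w ≠ h := fun e => hwne (by rw [e]; exact hfz)
      have hadj : H.Adj w h := by
        simp only [closedNbr, mem_filter, mem_univ, true_and] at hwmem
        tauto
      exact ⟨w, by simp [hD, hwne], hadj⟩
    have h1 : domNum W H ≤ D.card := Nat.sInf_le ⟨D, hDdom, rfl⟩
    refine h1.trans ((card_union_le _ _).trans ?_)
    have h2 : (univ.filter (fun h => f (g, h) ≠ 0)).card ≤ ∑ h, f (g, h) := by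
      calc (univ.filter (fun h => f (g, h) ≠ 0)).card
          = ∑ h ∈ univ.filter (fun h => f (g, h) ≠ 0), 1 := by simp
        _ ≤ ∑ h ∈ univ.filter (fun h => f (g, h) ≠ 0), f (g, h) :=
            Finset.sum_le_sum (fun h hh => Nat.one_le_iff_ne_zero.2 (mem_filter.1 hh).2)
        _ ≤ ∑ h, f (g, h) := Finset.sum_le_sum_of_subset (filter_subset _ _)
    exact add_le_add_left h2 _
  -- Step 2: horizontal weight at vertices of B g
  have key2 : ∀ g : V, ∀ h ∈ B g, 2 ≤ ∑ u ∈ univ.filter (fun u => G.Adj u g), f (u, h) := by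
    intro g h hh
    simp only [hBdef, mem_filter, mem_univ, true_and] at hh
    have h2 := hf2 (g, h)
    have hsub : closedNbr (G □ H) (g, h) ⊆ (closedNbr G g ×ˢ {h}) ∪ ({g} ×ˢ closedNbr H h) := by
      rintro ⟨a, b⟩ hx
      simp only [closedNbr, mem_filter, mem_univ, true_and, boxProd_adj, Prod.mk.injEq,
        mem_union, mem_product, mem_singleton] at hx ⊢
      tauto
    have hle : ∑ x ∈ closedNbr (G □ H) (g, h), f x ≤
        (∑ x ∈ closedNbr G g ×ˢ {h}, f x) + ∑ x ∈ {g} ×ˢ closedNbr H h, f x := by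
      refine (Finset.sum_le_sum_of_subset hsub).trans ?_
      exact Nat.le.intro (Finset.sum_union_inter)
    have hA : ∑ x ∈ closedNbr G g ×ˢ {h}, f x = ∑ u ∈ closedNbr G g, f (u, h) := by
      rw [Finset.sum_product]
      simp
    have hBz : ∑ x ∈ ({g} ×ˢ closedNbr H h), f x = 0 := by
      rw [Finset.sum_product]
      simpa using hh
    have hfgh : f (g, h) = 0 := by
      have hmem : h ∈ closedNbr H h := by simp [closedNbr]
      exact (Finset.sum_eq_zero_iff.1 hh) h hmem
    have hsplit : closedNbr G g = insert g (univ.filter (fun u => G.Adj u g)) := by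
      ext u
      simp only [closedNbr, mem_filter, mem_univ, true_and, mem_insert]
    have hgnomem : g ∉ univ.filter (fun u => G.Adj u g) := by simp
    have : (2 : ℕ) ≤ ∑ u ∈ closedNbr G g, f (u, h) := by
      omega
    rw [hsplit, Finset.sum_insert hgnomem, hfgh] at this
    simpa using this
  -- Step 3: counting
  have key3 : 2 * (∑ g ∈ I, (B g).card) ≤ 2 * ∑ u ∈ univ \ I, ∑ h, f (u, h) := by
    have h1 : ∀ g : V, 2 * (B g).card ≤ ∑ u ∈ univ.filter (fun u => G.Adj u g), ∑ h, f (u, h) := by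
      intro g
      calc 2 * (B g).card = ∑ _h ∈ B g, 2 := by rw [sum_const, smul_eq_mul, mul_comm]
        _ ≤ ∑ h ∈ B g, ∑ u ∈ univ.filter (fun u => G.Adj u g), f (u, h) :=
            Finset.sum_le_sum (key2 g)
        _ ≤ ∑ h, ∑ u ∈ univ.filter (fun u => G.Adj u g), f (u, h) :=
            Finset.sum_le_sum_of_subset (subset_univ _)
        _ = ∑ u ∈ univ.filter (fun u => G.Adj u g), ∑ h, f (u, h) := Finset.sum_comm
    have hclaw : ∀ u : V, (I.filter (fun g => G.Adj u g)).card ≤ 2 := by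
      intro u
      by_contra hc
      push_neg at hc
      obtain ⟨a, b, c, ha, hb, hcc, hab, hac, hbc⟩ := Finset.two_lt_card_iff.1 hc
      simp only [mem_filter] at ha hb hcc
      exact hG ⟨u, a, b, c, hab, hac, hbc, ha.2, hb.2, hcc.2,
        hIind a ha.1 b hb.1, hIind a ha.1 c hcc.1, hIind b hb.1 c hcc.1⟩
    calc 2 * ∑ g ∈ I, (B g).card = ∑ g ∈ I, 2 * (B g).card := by rw [mul_sum]
      _ ≤ ∑ g ∈ I, ∑ u ∈ univ.filter (fun u => G.Adj u g), ∑ h, f (u, h) :=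
          Finset.sum_le_sum (fun g _ => h1 g)
      _ = ∑ g ∈ I, ∑ u ∈ univ, (if G.Adj u g then ∑ h, f (u, h) else 0) := by
          refine Finset.sum_congr rfl (fun g _ => ?_)
          rw [Finset.sum_filter]
      _ = ∑ u ∈ univ, ∑ g ∈ I, (if G.Adj u g then ∑ h, f (u, h) else 0) := Finset.sum_comm
      _ = ∑ u ∈ univ, (I.filter (fun g => G.Adj u g)).card * ∑ h, f (u, h) := by
          refine Finset.sum_congr rfl (fun u _ => ?_)
          rw [← Finset.sum_filter, sum_const, smul_eq_mul]
      _ = ∑ u ∈ univ \ I, (I.filter (fun g => G.Adj u g)).card * ∑ h, f (u, h) := by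
          refine (Finset.sum_subset (sdiff_subset) ?_).symm
          intro u hu hnu
          have hu' : u ∈ I := by
            by_contra hni
            exact hnu (Finset.mem_sdiff.2 ⟨hu, hni⟩)
          have hemp : I.filter (fun g => G.Adj u g) = ∅ :=
            Finset.filter_eq_empty_iff.2 (fun {g} hg => hIind u hu' g hg)
          rw [hemp]
          simp
      _ ≤ ∑ u ∈ univ \ I, 2 * ∑ h, f (u, h) :=
          Finset.sum_le_sum (fun u _ => Nat.mul_le_mul_right _ (hclaw u))
      _ = 2 * ∑ u ∈ univ \ I, ∑ h, f (u, h) := by rw [mul_sum]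
  have key3' : (∑ g ∈ I, (B g).card) ≤ ∑ u ∈ univ \ I, ∑ h, f (u, h) := by omega
  calc domNum V G * domNum W H ≤ I.card * domNum W H := Nat.mul_le_mul_right _ hγG
    _ = ∑ _g ∈ I, domNum W H := by rw [sum_const, smul_eq_mul]
    _ ≤ ∑ g ∈ I, ((∑ h, f (g, h)) + (B g).card) := Finset.sum_le_sum (fun g _ => hdomH g)
    _ = (∑ g ∈ I, ∑ h, f (g, h)) + ∑ g ∈ I, (B g).card := Finset.sum_add_distrib
    _ ≤ (∑ g ∈ I, ∑ h, f (g, h)) + ∑ u ∈ univ \ I, ∑ h, f (u, h) := add_le_add_right key3' _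
    _ = ∑ u, ∑ h, f (u, h) := by rw [add_comm, Finset.sum_sdiff (subset_univ I)]
    _ = ∑ v, f v := by rw [← Fintype.sum_prod_type]
end

section
/- For the cycle C_n on n ≥ 3 vertices, which is claw-free, and any finite simple graph H, γ_{{2}}(C_n □ H) ≥ ⌈n/3⌉ · γ(H). -/
open SimpleGraph Finset
open scoped Classical
open scoped Fin.NatCast Fin.CommRing

lemma cycleNbr (N : ℕ) (u v : Fin (N+3)) (h : (SimpleGraph.cycleGraph (N+3)).Adj u v) :
    u = v - 1 ∨ u = v + 1 := by
  rw [SimpleGraph.cycleGraph_adj'] at h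
  have h1 : ∀ x : Fin (N+3), x.val = 1 → x = 1 := by
    intro x hx; apply Fin.ext; rw [hx]; rfl
  rcases h with h | h
  · right
    have h2 := h1 _ h
    calc u = v + (u - v) := by ring
      _ = v + 1 := by rw [h2]
  · left
    have h2 := h1 _ h
    calc u = v - (v - u) := by ring
      _ = v - 1 := by rw [h2]

noncomputable def auxS {W : Type*} [Fintype W] (N : ℕ) (st : ℕ → ℕ)
    (f : Fin (N+3) × W → ℕ) (j : ℕ) : Finset W :=
  Finset.univ.filter (fun h => ∃ i ∈ Finset.Ico (st j) (st (j+1)), f ((i : Fin (N+3)), h) ≠ 0)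

noncomputable def auxB {W : Type*} [Fintype W] (H : SimpleGraph W) (N : ℕ) (st : ℕ → ℕ)
    (f : Fin (N+3) × W → ℕ) (j : ℕ) : Finset W :=
  Finset.univ.filter (fun h => h ∉ auxS N st f j ∧ ∀ u, H.Adj u h → u ∉ auxS N st f j)

lemma auxdom {W : Type*} [Fintype W] (H : SimpleGraph W) (N : ℕ) (st : ℕ → ℕ)
    (f : Fin (N+3) × W → ℕ) (j : ℕ) :
    domNum W H ≤ (auxS N st f j).card + (auxB H N st f j).card := by
  have hds : IsDomSet H (auxS N st f j ∪ auxB H N st f j) := by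
    intro v hv
    rw [Finset.mem_union] at hv
    push_neg at hv
    obtain ⟨h1, h2⟩ := hv
    simp only [auxB, Finset.mem_filter, Finset.mem_univ, true_and, not_and] at h2
    have h3 := h2 h1
    push_neg at h3
    obtain ⟨u, hu1, hu2⟩ := h3
    exact ⟨u, Finset.mem_union_left _ hu2, hu1⟩
  calc domNum W H ≤ (auxS N st f j ∪ auxB H N st f j).card :=
        Nat.sInf_le ⟨_, hds, rfl⟩
    _ ≤ _ := Finset.card_union_le _ _

lemma auxtwo {W : Type*} [Fintype W] (H : SimpleGraph W) (N : ℕ) (st : ℕ → ℕ)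
    (f : Fin (N+3) × W → ℕ) (j : ℕ) (hsz : st j + 2 ≤ st (j+1))
    (hfd : ∀ v, 2 ≤ ∑ u ∈ closedNbr (SimpleGraph.cycleGraph (N+3) □ H) v, f u)
    (h : W) (hh : h ∈ auxB H N st f j) :
    2 ≤ f (((st j : ℕ) : Fin (N+3)) - 1, h) := by
  simp only [auxB, Finset.mem_filter, Finset.mem_univ, true_and] at hh
  obtain ⟨hnS, hnbr⟩ := hh
  have hz : ∀ i ∈ Finset.Ico (st j) (st (j+1)), ∀ h' : W,
      f ((i : Fin (N+3)), h') ≠ 0 → h' ∈ auxS N st f j := by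
    intro i hi h' hne
    simp only [auxS, Finset.mem_filter, Finset.mem_univ, true_and]
    exact ⟨i, hi, hne⟩
  have hi1 : st j ∈ Finset.Ico (st j) (st (j+1)) := by simp; omega
  have hi2 : st j + 1 ∈ Finset.Ico (st j) (st (j+1)) := by simp; omega
  set a : Fin (N+3) := ((st j : ℕ) : Fin (N+3)) with ha
  have hmem : (a - 1, h) ∈ closedNbr (SimpleGraph.cycleGraph (N+3) □ H) (a, h) := by
    simp only [closedNbr, Finset.mem_filter, Finset.mem_univ, true_and]
    right
    rw [SimpleGraph.boxProd_adj]
    left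
    refine ⟨?_, rfl⟩
    rw [SimpleGraph.cycleGraph_adj']
    right
    have hsub : a - (a - 1) = 1 := by ring
    rw [hsub]; rfl
  have hkey := hfd (a, h)
  rw [Finset.sum_eq_single_of_mem _ hmem ?zero] at hkey
  · exact hkey
  case zero =>
    intro u hu hune
    simp only [closedNbr, Finset.mem_filter, Finset.mem_univ, true_and] at hu
    rcases hu with rfl | hadj
    · by_contra h0
      exact hnS (hz _ hi1 _ h0)
    · rw [SimpleGraph.boxProd_adj] at hadj
      rcases hadj with ⟨h1, h2⟩ | ⟨h1, h2⟩
      · rcases cycleNbr N u.1 a h1 with h3 | h3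
        · exact absurd (Prod.ext h3 (show u.2 = h from h2) : u = (a - 1, h)) hune
        · by_contra h0
          have hu2 : u = (((st j + 1 : ℕ) : Fin (N+3)), h) :=
            Prod.ext (by rw [h3, ha]; push_cast; ring) (show u.2 = h from h2)
          rw [hu2] at h0
          exact hnS (hz _ hi2 _ h0)
      · by_contra h0
        have hu2 : u = (a, u.2) := Prod.ext (show u.1 = a from h2) rfl
        rw [hu2] at h0
        exact (hnbr u.2 h1) (hz _ hi1 _ h0)

lemma auxcount {W : Type*} [Fintype W] (H : SimpleGraph W) (N : ℕ) (st : ℕ → ℕ)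
    (f : Fin (N+3) × W → ℕ) (j j' : ℕ)
    (hsz : st j + 2 ≤ st (j+1)) (hsz' : st j' + 2 ≤ st (j'+1))
    (hfd : ∀ v, 2 ≤ ∑ u ∈ closedNbr (SimpleGraph.cycleGraph (N+3) □ H) v, f u)
    (hidx : ((st j' : ℕ) : Fin (N+3)) - 1 = ((st (j+1) - 1 : ℕ) : Fin (N+3))) :
    (auxS N st f j).card + (auxB H N st f j').card
      ≤ ∑ i ∈ Finset.Ico (st j) (st (j+1)), ∑ h : W, f ((i : Fin (N+3)), h) := by
  rw [Finset.sum_comm]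
  have cardeq : ∀ s : Finset W, s.card = ∑ h : W, (if h ∈ s then 1 else 0) := by
    intro s
    rw [Finset.sum_ite_mem, Finset.univ_inter]
    exact Finset.card_eq_sum_ones s
  rw [cardeq (auxS N st f j), cardeq (auxB H N st f j'), ← Finset.sum_add_distrib]
  apply Finset.sum_le_sum
  intro h _
  by_cases hb : h ∈ auxB H N st f j'
  · have h2 := auxtwo H N st f j' hsz' hfd h hb
    rw [hidx] at h2
    have hmem : st (j+1) - 1 ∈ Finset.Ico (st j) (st (j+1)) := by simp; omega
    calc (if h ∈ auxS N st f j then 1 else 0) + (if h ∈ auxB H N st f j' then 1 else 0)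
        ≤ 2 := by rw [if_pos hb]; split <;> omega
      _ ≤ f (((st (j+1) - 1 : ℕ) : Fin (N+3)), h) := h2
      _ ≤ ∑ i ∈ Finset.Ico (st j) (st (j+1)), f ((i : Fin (N+3)), h) :=
          Finset.single_le_sum (f := fun i : ℕ => f ((i : Fin (N+3)), h))
            (fun _ _ => Nat.zero_le _) hmem
  · rw [if_neg hb, add_zero]
    by_cases hs : h ∈ auxS N st f j
    · rw [if_pos hs]
      simp only [auxS, Finset.mem_filter, Finset.mem_univ, true_and] at hs
      obtain ⟨i, hi, hne⟩ := hs
      calc 1 ≤ f ((i : Fin (N+3)), h) := Nat.one_le_iff_ne_zero.mpr hne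
        _ ≤ _ := Finset.single_le_sum (f := fun i : ℕ => f ((i : Fin (N+3)), h))
            (fun _ _ => Nat.zero_le _) hi
    · rw [if_neg hs]; exact Nat.zero_le _

lemma auxblocks (st : ℕ → ℕ) (hmono : Monotone st) (h0 : st 0 = 0) (g : ℕ → ℕ) (k : ℕ) :
    ∑ j ∈ Finset.range k, ∑ i ∈ Finset.Ico (st j) (st (j+1)), g i
      = ∑ i ∈ Finset.Ico 0 (st k), g i := by
  induction k with
  | zero => simp [h0]
  | succ k ih =>
    rw [Finset.sum_range_succ, ih,
      Finset.sum_Ico_consecutive _ (by simpa [h0] using hmono (Nat.zero_le k))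
        (hmono (Nat.le_succ k))]

theorem stmt16 {W : Type*} [Fintype W] (n : ℕ) (hn : 3 ≤ n) (H : SimpleGraph W) :
    (n + 2) / 3 * domNum W H ≤ kDomNum (Fin n × W) (SimpleGraph.cycleGraph n □ H) 2 := by
  obtain ⟨N, rfl⟩ : ∃ N, n = N + 3 := ⟨n - 3, by omega⟩
  obtain ⟨M, hM⟩ : ∃ M, (N + 3 + 2) / 3 = M + 1 := ⟨(N + 3 + 2) / 3 - 1, by omega⟩
  rw [hM]
  set t := 3 * (M + 1) - (N + 3) with ht
  set st : ℕ → ℕ := fun j => 3 * j - min j t with hst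
  have hsz : ∀ j, st j + 2 ≤ st (j + 1) := by intro j; simp only [hst]; omega
  have hmono : Monotone st := monotone_nat_of_le_succ (fun j => by have := hsz j; omega)
  have hst0 : st 0 = 0 := by simp [hst]
  have hstm : st (M + 1) = N + 3 := by simp only [hst]; omega
  clear_value st t
  clear hst ht
  -- obtain an optimal {2}-dominating function
  have hne : {w | ∃ f : Fin (N+3) × W → ℕ,
      IsKDomFun (SimpleGraph.cycleGraph (N+3) □ H) 2 f ∧ w = ∑ v, f v}.Nonempty := by
    refine ⟨∑ _v : Fin (N+3) × W, 2, fun _ => 2, ⟨fun _ => le_rfl, fun v => ?_⟩, rfl⟩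
    have hv : v ∈ closedNbr (SimpleGraph.cycleGraph (N+3) □ H) v := by simp [closedNbr]
    exact Finset.single_le_sum (f := fun _ => (2:ℕ)) (fun _ _ => Nat.zero_le _) hv
  obtain ⟨f, ⟨hf2, hfd⟩, hw⟩ := Nat.sInf_mem hne
  unfold kDomNum
  rw [hw]
  clear hw hne hf2 hM hn
  -- index arithmetic for the "next cell" boundary column
  have hidx : ∀ j : Fin (M+1), ((st ((j + 1 : Fin (M+1))).val : ℕ) : Fin (N+3)) - 1
      = ((st (j.val + 1) - 1 : ℕ) : Fin (N+3)) := by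
    intro j
    have hv : ((j + 1 : Fin (M+1))).val = (j.val + 1) % (M + 1) := by
      rw [Fin.val_add, Fin.val_one']
      conv_rhs => rw [Nat.add_mod]
      rw [Nat.mod_eq_of_lt j.isLt]
    by_cases hj : j.val + 1 = M + 1
    · rw [hv, hj, Nat.mod_self, hst0, hstm]
      have hNe : (N + 3 - 1 : ℕ) = N + 2 := by omega
      rw [hNe]
      have h1 : ((N + 2 : ℕ) : Fin (N+3)) + 1 = 0 := by
        rw [← Nat.cast_one, ← Nat.cast_add]
        exact Fin.natCast_self _
      rw [Nat.cast_zero]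
      exact (eq_sub_of_add_eq h1).symm
    · rw [hv, Nat.mod_eq_of_lt (by omega)]
      rw [Nat.cast_sub (by have := hsz j.val; omega), Nat.cast_one]
  calc (M + 1) * domNum W H = ∑ _j : Fin (M+1), domNum W H := by
        rw [Finset.sum_const, Finset.card_univ, Fintype.card_fin, smul_eq_mul]
    _ ≤ ∑ j : Fin (M+1), ((auxS N st f j.val).card + (auxB H N st f j.val).card) :=
        Finset.sum_le_sum (fun j _ => auxdom H N st f j.val)
    _ = ∑ j : Fin (M+1), (auxS N st f j.val).card
        + ∑ j : Fin (M+1), (auxB H N st f j.val).card := Finset.sum_add_distrib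
    _ = ∑ j : Fin (M+1), (auxS N st f j.val).card
        + ∑ j : Fin (M+1), (auxB H N st f ((j + 1 : Fin (M+1))).val).card := by
        have hre := Equiv.sum_comp (Equiv.addRight (1 : Fin (M+1)))
          (fun j => (auxB H N st f j.val).card)
        simp only [Equiv.coe_addRight] at hre
        rw [hre]
    _ = ∑ j : Fin (M+1), ((auxS N st f j.val).card
        + (auxB H N st f ((j + 1 : Fin (M+1))).val).card) := Finset.sum_add_distrib.symm
    _ ≤ ∑ j : Fin (M+1), ∑ i ∈ Finset.Ico (st j.val) (st (j.val + 1)),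
          ∑ h : W, f ((i : Fin (N+3)), h) :=
        Finset.sum_le_sum (fun j _ =>
          auxcount H N st f j.val ((j + 1 : Fin (M+1))).val (hsz j.val) (hsz _) hfd (hidx j))
    _ = ∑ j ∈ Finset.range (M+1), ∑ i ∈ Finset.Ico (st j) (st (j + 1)),
          ∑ h : W, f ((i : Fin (N+3)), h) :=
        Fin.sum_univ_eq_sum_range
          (fun j => ∑ i ∈ Finset.Ico (st j) (st (j + 1)), ∑ h : W, f ((i : Fin (N+3)), h)) (M+1)
    _ = ∑ i ∈ Finset.Ico 0 (st (M+1)), ∑ h : W, f ((i : Fin (N+3)), h) :=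
        auxblocks st hmono hst0 _ (M+1)
    _ = ∑ i ∈ Finset.range (N+3), ∑ h : W, f ((i : Fin (N+3)), h) := by
        rw [hstm, ← Finset.range_eq_Ico]
    _ = ∑ v, f v := by
        rw [Fintype.sum_prod_type,
          ← Fin.sum_univ_eq_sum_range (fun i => ∑ h : W, f ((i : Fin (N+3)), h)) (N+3)]
        exact Finset.sum_congr rfl (fun a _ => by rw [Fin.cast_val_eq_self])
end

section
/- If G is a claw-free graph with a perfect independent dominating set S (every vertex not in S has exactly one neighbor in S), and H is any graph, then for a minimum weak {2}-dominating multiset D of G □ H, each vertex (v,h) of D satisfies that v lies in the closed neighborhood of exactly one vertex of S, and hence the projections of D partitioned by the vertices of S each dominate H, giving γ_{w{2}}(G □ H) ≥ |S|·γ(H). -/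
open SimpleGraph Finset
open scoped Classical

theorem stmt18 {V W : Type*} [Fintype V] [Fintype W]
    (G : SimpleGraph V) (H : SimpleGraph W) (hG : ClawFree G) (S : Finset V)
    (hSdom : IsIndepDomSet G S)
    (hperf : ∀ v, v ∉ S → (S.filter (fun u => G.Adj u v)).card = 1) :
    (∀ v : V, ∃! s, s ∈ S ∧ (v = s ∨ G.Adj s v)) ∧
      S.card * domNum W H ≤ weakKDomNum (V × W) (G □ H) 2 := by
  obtain ⟨hdom, hindep⟩ := hSdom
  have huniq : ∀ v : V, ∃! s, s ∈ S ∧ (v = s ∨ G.Adj s v) := by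
    intro v
    by_cases hv : v ∈ S
    · refine ⟨v, ⟨hv, Or.inl rfl⟩, ?_⟩
      rintro s ⟨hs, h | h⟩
      · exact h.symm
      · exact absurd h (hindep s hs v hv)
    · obtain ⟨s, hs⟩ := Finset.card_eq_one.mp (hperf v hv)
      have hsmem : s ∈ S.filter (fun u => G.Adj u v) := hs ▸ Finset.mem_singleton_self s
      rw [Finset.mem_filter] at hsmem
      refine ⟨s, ⟨hsmem.1, Or.inr hsmem.2⟩, ?_⟩
      rintro t ⟨ht, h | h⟩
      · exact absurd (h ▸ ht) hv
      · have : t ∈ S.filter (fun u => G.Adj u v) := Finset.mem_filter.mpr ⟨ht, h⟩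
        rw [hs, Finset.mem_singleton] at this; exact this
  refine ⟨huniq, ?_⟩
  have hne : {w | ∃ f : V × W → ℕ, IsWeakKDomFun (G □ H) 2 f ∧ w = ∑ v, f v}.Nonempty := by
    refine ⟨∑ v : V × W, (2 : ℕ), fun _ => 2, ⟨fun _ => le_refl 2, fun v h => by simp at h⟩, rfl⟩
  rw [weakKDomNum]
  apply le_csInf hne
  rintro w ⟨f, ⟨hf1, hf2⟩, rfl⟩
  set D : V → Finset W := fun s => Finset.univ.filter
    (fun h => ∃ v ∈ closedNbr G s, f (v, h) ≠ 0) with hD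
  -- each D s dominates H
  have hDdom : ∀ s ∈ S, IsDomSet H (D s) := by
    intro s hsS h hh
    have hzero : ∀ v ∈ closedNbr G s, f (v, h) = 0 := by
      intro v hv
      by_contra hne'
      exact hh (Finset.mem_filter.mpr ⟨Finset.mem_univ _, v, hv, hne'⟩)
    have hss : s ∈ closedNbr G s := Finset.mem_filter.mpr ⟨Finset.mem_univ _, Or.inl rfl⟩
    have hfsh : f (s, h) = 0 := hzero s hss
    have h2 := hf2 (s, h) hfsh
    have hsumne : (∑ u ∈ closedNbr (G □ H) (s, h), f u) ≠ 0 := by omega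
    obtain ⟨u, hu, hfu⟩ := Finset.exists_ne_zero_of_sum_ne_zero hsumne
    obtain ⟨a, b⟩ := u
    simp only [closedNbr, Finset.mem_filter, Finset.mem_univ, true_and] at hu
    rcases hu with heq | hadj
    · exact absurd (heq ▸ hfsh) hfu
    · rw [SimpleGraph.boxProd_adj] at hadj
      simp only at hadj
      rcases hadj with ⟨hadj1, heq2⟩ | ⟨hadj2, heq1⟩
      · have hmem : a ∈ closedNbr G s := Finset.mem_filter.mpr ⟨Finset.mem_univ _, Or.inr hadj1⟩
        have := hzero a hmem
        rw [← heq2] at this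
        exact absurd this hfu
      · have hb : f (a, b) ≠ 0 := hfu
        rw [heq1] at hb
        exact ⟨b, Finset.mem_filter.mpr ⟨Finset.mem_univ _, s, hss, hb⟩, hadj2⟩
  -- card bound per s
  have hcard : ∀ s : V, (D s).card ≤ ∑ v ∈ closedNbr G s, ∑ h : W, f (v, h) := by
    intro s
    rw [Finset.sum_comm]
    calc (D s).card = ∑ _h ∈ D s, 1 := by simp
    _ ≤ ∑ h ∈ D s, ∑ v ∈ closedNbr G s, f (v, h) := by
        apply Finset.sum_le_sum
        intro h hh
        rw [hD, Finset.mem_filter] at hh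
        obtain ⟨_, v, hv, hfv⟩ := hh
        calc 1 ≤ f (v, h) := Nat.one_le_iff_ne_zero.mpr hfv
        _ ≤ ∑ v ∈ closedNbr G s, f (v, h) :=
            Finset.single_le_sum (f := fun x => f (x, h)) (fun _ _ => Nat.zero_le _) hv
    _ ≤ ∑ h : W, ∑ v ∈ closedNbr G s, f (v, h) :=
        Finset.sum_le_sum_of_subset (Finset.subset_univ _)
  -- disjointness of closed neighborhoods over S
  have hdisj : (S : Set V).PairwiseDisjoint (closedNbr G) := by
    intro s hs t ht hst
    simp only [Function.onFun]
    rw [Finset.disjoint_left]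
    intro v hvs hvt
    rw [closedNbr, Finset.mem_filter] at hvs hvt
    have h1 : s ∈ S ∧ (v = s ∨ G.Adj s v) := by
      refine ⟨hs, ?_⟩
      rcases hvs.2 with h | h
      · exact Or.inl h
      · exact Or.inr h.symm
    have h2 : t ∈ S ∧ (v = t ∨ G.Adj t v) := by
      refine ⟨ht, ?_⟩
      rcases hvt.2 with h | h
      · exact Or.inl h
      · exact Or.inr h.symm
    obtain ⟨u, _, hu⟩ := huniq v
    exact hst ((hu s h1).trans (hu t h2).symm)
  -- main chain
  have hstep1 : ∀ s ∈ S, domNum W H ≤ (D s).card := by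
    intro s hs
    exact Nat.sInf_le ⟨D s, hDdom s hs, rfl⟩
  calc S.card * domNum W H = ∑ _s ∈ S, domNum W H := by
        rw [Finset.sum_const, smul_eq_mul]
  _ ≤ ∑ s ∈ S, (D s).card := Finset.sum_le_sum hstep1
  _ ≤ ∑ s ∈ S, ∑ v ∈ closedNbr G s, ∑ h : W, f (v, h) :=
      Finset.sum_le_sum (fun s _ => hcard s)
  _ = ∑ v ∈ S.biUnion (closedNbr G), ∑ h : W, f (v, h) :=
      (Finset.sum_biUnion hdisj).symm
  _ ≤ ∑ v : V, ∑ h : W, f (v, h) :=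
      Finset.sum_le_sum_of_subset (Finset.subset_univ _)
  _ = ∑ p : V × W, f p := by rw [← Fintype.sum_prod_type]
end
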